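/- Let d ∈ (0,1) and let ω : ℝ → ℝ be a function such that ω(h) − d = O(h) as h → 0. Then g_M(ω(h)) − d = O(h³) as h → 0, i.e., the WENO-M map improves the order of agreement with the ideal weight d from first order to third order. -/

import Mathlib

/-- Let `d ∈ (0,1)` and let `ω : ℝ → ℝ` be a function such that
`ω(h) − d = O(h)` as `h → 0`.  Then `g_M(ω(h)) − d = O(h³)` as `h → 0`:
the WENO-M map improves the order of agreement with the ideal weight `d`
from first order to third order. -/
theorem stmt2 (d : ℝ) (hd : d ∈ Set.Ioo (0 : ℝ) 1)
    (gM : ℝ → ℝ)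
    (hgM : ∀ ω : ℝ, gM ω = ω * (d + d ^ 2 - 3 * d * ω + ω ^ 2) / (d ^ 2 + ω * (1 - 2 * d)))
    (ω : ℝ → ℝ)
    (hω : (fun h : ℝ => ω h - d) =O[nhds 0] fun h : ℝ => h) :
    (fun h : ℝ => gM (ω h) - d) =O[nhds 0] fun h : ℝ => h ^ 3 := by
  obtain ⟨hd0, hd1⟩ := hd
  have hc : (0:ℝ) < d * (1 - d) := by nlinarith
  -- ω h → d
  have ht0 : Filter.Tendsto (fun h : ℝ => ω h - d) (nhds 0) (nhds 0) :=
    hω.trans_tendsto Filter.tendsto_id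
  have hω0 : Filter.Tendsto ω (nhds 0) (nhds d) := by
    have := ht0.add_const d
    simpa using this
  -- denominator tends to d(1-d) > 0
  have htden : Filter.Tendsto (fun h : ℝ => d ^ 2 + ω h * (1 - 2 * d)) (nhds 0)
      (nhds (d * (1 - d))) := by
    have h1 := Filter.Tendsto.const_add (d ^ 2) (hω0.mul_const (1 - 2 * d))
    have h2 : d ^ 2 + d * (1 - 2 * d) = d * (1 - d) := by ring
    rwa [h2] at h1
  have hev : ∀ᶠ h in nhds (0 : ℝ), d * (1 - d) / 2 ≤ d ^ 2 + ω h * (1 - 2 * d) :=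
    htden.eventually (eventually_ge_nhds (by linarith))
  -- gM (ω h) - d = (ω h - d)^3 / denominator is O of (ω h - d)^3
  have step1 : (fun h : ℝ => gM (ω h) - d) =O[nhds 0] fun h : ℝ => (ω h - d) ^ 3 := by
    rw [Asymptotics.isBigO_iff]
    refine ⟨2 / (d * (1 - d)), ?_⟩
    filter_upwards [hev] with h hh
    have hden : (0:ℝ) < d ^ 2 + ω h * (1 - 2 * d) := by linarith
    have hval : gM (ω h) - d = (ω h - d) ^ 3 / (d ^ 2 + ω h * (1 - 2 * d)) := by
      rw [hgM]
      rw [eq_div_iff hden.ne', sub_mul, div_mul_cancel₀ _ hden.ne']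
      ring
    rw [hval, Real.norm_eq_abs, Real.norm_eq_abs, abs_div, abs_of_pos hden]
    calc |(ω h - d) ^ 3| / (d ^ 2 + ω h * (1 - 2 * d))
        ≤ |(ω h - d) ^ 3| / (d * (1 - d) / 2) := by
          apply div_le_div_of_nonneg_left (abs_nonneg _) (by linarith) hh
      _ = 2 / (d * (1 - d)) * |(ω h - d) ^ 3| := by
          field_simp
  exact step1.trans (hω.pow 3)
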